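/- Let (G,S) be a pair of binary rooted trees on the same leaf-label set. Then c(G,S) = c(G,G) if and only if G and S induce the same bipartition of the leaf set at their roots (i.e., the leaf sets of the left and right root subtrees of S coincide, as an unordered pair, with those of G). -/

import Mathlib

/-- Binary rooted trees with leaves labeled by elements of `X`. -/
inductive LTree (X : Type) : Type
  | leaf : X → LTree X
  | node : LTree X → LTree X → LTree X

namespace LTree

variable {X : Type} [DecidableEq X]

/-- The list of leaf labels of a tree, read left to right. -/
def labelList : LTree X → List X
  | leaf x => [x]
  | node l r => labelList l ++ labelList r

/-- The set of leaf labels of a tree. -/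
def labels (t : LTree X) : Finset X := (labelList t).toFinset

/-- The tree is bijectively labeled: no label is repeated. -/
def DistinctLabels (t : LTree X) : Prop := (labelList t).Nodup

/-- The subtree rooted at a position (paths: `false` = left, `true` = right;
junk value below a leaf). -/
def subtreeAt : LTree X → List Bool → LTree X
  | t, [] => t
  | leaf x, _ :: _ => leaf x
  | node l _, false :: p => subtreeAt l p
  | node _ r, true :: p => subtreeAt r p

/-- `p` is a valid position (node) of the tree. -/
def isValidPos : LTree X → List Bool → Prop
  | _, [] => True
  | leaf _, _ :: _ => False
  | node l _, false :: p => isValidPos l p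
  | node _ r, true :: p => isValidPos r p

/-- The set of positions of the leaves of a tree. -/
def leafPositions : LTree X → Finset (List Bool)
  | leaf _ => {([] : List Bool)}
  | node l r =>
      (leafPositions l).image (false :: ·) ∪ (leafPositions r).image (true :: ·)

/-- A root ancestral configuration of `G`: an antichain of non-root nodes of `G`
whose descendant-leaf sets partition the leaf set; equivalently, a set of valid
non-root positions such that every leaf position has exactly one weak ancestor in
the set.  This is the set of root configurations of `G` realized on the matching
species tree `G` itself. -/
def IsConfig (G : LTree X) (A : Finset (List Bool)) : Prop :=
  (∀ p ∈ A, isValidPos G p ∧ p ≠ []) ∧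
  ∀ q ∈ leafPositions G, ∃! p, p ∈ A ∧ p <+: q

/-- The set of leaf labels descended from position `p` of `G`. -/
def labelsAt (G : LTree X) (p : List Bool) : Finset X := labels (subtreeAt G p)

/-- A root ancestral configuration of the gene tree `G` realized on the species
tree `S = node Sl Sr`: a root ancestral configuration of `G` each of whose
lineages contains no antipodal pair of leaves, i.e. each lineage has all of its
descendant leaf labels contained in a single root subtree of `S`. -/
def IsConfigOn (G Sl Sr : LTree X) (A : Finset (List Bool)) : Prop :=
  IsConfig G A ∧
  ∀ p ∈ A, labelsAt G p ⊆ labels Sl ∨ labelsAt G p ⊆ labels Sr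

end LTree

open LTree

namespace LTreeAux

variable {X : Type} [DecidableEq X]

/-- All valid positions of a tree, as a finset. -/
def allPos : LTree X → Finset (List Bool)
  | LTree.leaf _ => {([] : List Bool)}
  | LTree.node l r =>
      insert [] ((allPos l).image (false :: ·) ∪ (allPos r).image (true :: ·))

lemma mem_allPos : ∀ (t : LTree X) (p : List Bool), isValidPos t p → p ∈ allPos t := by
  intro t
  induction t with
  | leaf x =>
      intro p hp
      cases p with
      | nil => simp [allPos]
      | cons b p => exact absurd hp (by simp [isValidPos])
  | node l r ihl ihr =>
      intro p hp
      cases p with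
      | nil => simp [allPos]
      | cons b p =>
          cases b
          · simp only [allPos, Finset.mem_insert, Finset.mem_union, Finset.mem_image]
            exact Or.inr (Or.inl ⟨p, ihl p hp, rfl⟩)
          · simp only [allPos, Finset.mem_insert, Finset.mem_union, Finset.mem_image]
            exact Or.inr (Or.inr ⟨p, ihr p hp, rfl⟩)

lemma config_finite (G : LTree X) : {A : Finset (List Bool) | IsConfig G A}.Finite := by
  apply Set.Finite.subset (allPos G).powerset.finite_toSet
  intro A hA
  simp only [Finset.coe_powerset, Set.mem_preimage, Set.mem_powerset_iff, Finset.coe_subset]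
  intro p hp
  exact mem_allPos G p ((hA.1 p hp).1)

lemma labels_node (l r : LTree X) : labels (LTree.node l r) = labels l ∪ labels r := by
  simp [labels, labelList]

lemma labels_nonempty (t : LTree X) : (labels t).Nonempty := by
  induction t with
  | leaf x => exact ⟨x, by simp [labels, labelList]⟩
  | node l r ihl ihr => rw [labels_node]; exact ihl.mono Finset.subset_union_left

lemma labels_subtreeAt : ∀ (t : LTree X) (p : List Bool), labels (subtreeAt t p) ⊆ labels t := by
  intro t
  induction t with
  | leaf x =>
      intro p
      cases p <;> simp [subtreeAt]
  | node l r ihl ihr =>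
      intro p
      cases p with
      | nil => simp [subtreeAt]
      | cons b p =>
          cases b
          · exact (ihl p).trans (by rw [labels_node]; exact Finset.subset_union_left)
          · exact (ihr p).trans (by rw [labels_node]; exact Finset.subset_union_right)

/-- The top configuration `{[false], [true]}` is a config. -/
lemma top_isConfig (Gl Gr : LTree X) :
    IsConfig (LTree.node Gl Gr) ({[false], [true]} : Finset (List Bool)) := by
  constructor
  · intro p hp
    simp only [Finset.mem_insert, Finset.mem_singleton] at hp
    rcases hp with rfl | rfl
    · exact ⟨by simp [isValidPos], by simp⟩
    · exact ⟨by simp [isValidPos], by simp⟩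
  · intro q hq
    simp only [leafPositions, Finset.mem_union, Finset.mem_image] at hq
    rcases hq with ⟨q', _, rfl⟩ | ⟨q', _, rfl⟩
    · refine ⟨[false], ⟨by simp, ⟨q', rfl⟩⟩, ?_⟩
      rintro p ⟨hpA, hpre⟩
      simp only [Finset.mem_insert, Finset.mem_singleton] at hpA
      rcases hpA with rfl | rfl
      · rfl
      · rcases hpre with ⟨s, hs⟩
        simp at hs
    · refine ⟨[true], ⟨by simp, ⟨q', rfl⟩⟩, ?_⟩
      rintro p ⟨hpA, hpre⟩
      simp only [Finset.mem_insert, Finset.mem_singleton] at hpA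
      rcases hpA with rfl | rfl
      · rcases hpre with ⟨s, hs⟩
        simp at hs
      · rfl

lemma bipart_aux {Xl Xr Yl Yr : Finset X} (hu : Xl ∪ Xr = Yl ∪ Yr)
    (hdS : Disjoint Yl Yr) (h1 : Xl ⊆ Yl) (h2 : Xr ⊆ Yr) :
    Xl = Yl ∧ Xr = Yr := by
  constructor
  · refine Finset.Subset.antisymm h1 (fun x hx => ?_)
    have hx' : x ∈ Xl ∪ Xr := by rw [hu]; exact Finset.mem_union_left _ hx
    rcases Finset.mem_union.1 hx' with h | h
    · exact h
    · exact absurd (h2 h) (Finset.disjoint_left.1 hdS hx)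
  · refine Finset.Subset.antisymm h2 (fun x hx => ?_)
    have hx' : x ∈ Xl ∪ Xr := by rw [hu]; exact Finset.mem_union_right _ hx
    rcases Finset.mem_union.1 hx' with h | h
    · exact absurd hx (Finset.disjoint_left.1 hdS (h1 h))
    · exact h

lemma bipart {Xl Xr Yl Yr : Finset X} (hu : Xl ∪ Xr = Yl ∪ Yr)
    (hdS : Disjoint Yl Yr) (hSLne : Yl.Nonempty) (hSRne : Yr.Nonempty)
    (h1 : Xl ⊆ Yl ∨ Xl ⊆ Yr) (h2 : Xr ⊆ Yl ∨ Xr ⊆ Yr) :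
    (Xl = Yl ∧ Xr = Yr) ∨ (Xl = Yr ∧ Xr = Yl) := by
  rcases h1 with h1 | h1 <;> rcases h2 with h2 | h2
  · exfalso
    obtain ⟨x, hx⟩ := hSRne
    have hx' : x ∈ Xl ∪ Xr := by rw [hu]; exact Finset.mem_union_right _ hx
    have hxSL : x ∈ Yl := by
      rcases Finset.mem_union.1 hx' with h | h
      · exact h1 h
      · exact h2 h
    exact Finset.disjoint_left.1 hdS hxSL hx
  · exact Or.inl (bipart_aux hu hdS h1 h2)
  · refine Or.inr ?_
    have := bipart_aux (Yl := Yr) (Yr := Yl)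
      (by rw [hu, Finset.union_comm]) hdS.symm h1 h2
    exact this
  · exfalso
    obtain ⟨x, hx⟩ := hSLne
    have hx' : x ∈ Xl ∪ Xr := by rw [hu]; exact Finset.mem_union_left _ hx
    have hxSR : x ∈ Yr := by
      rcases Finset.mem_union.1 hx' with h | h
      · exact h1 h
      · exact h2 h
    exact Finset.disjoint_left.1 hdS hx hxSR

end LTreeAux

open LTreeAux

/-- For gene tree `G = node Gl Gr` and species tree `S = node Sl Sr` on the same
label set, `c(G,S) = c(G,G)` if and only if `G` and `S` induce the same
(unordered) bipartition of the leaf set at their roots. -/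
theorem configOn_card_eq_iff (X : Type) [DecidableEq X] (Gl Gr Sl Sr : LTree X)
    (hG : DistinctLabels (LTree.node Gl Gr))
    (hS : DistinctLabels (LTree.node Sl Sr))
    (hlab : labels (LTree.node Gl Gr) = labels (LTree.node Sl Sr)) :
    Nat.card {A : Finset (List Bool) // IsConfigOn (LTree.node Gl Gr) Sl Sr A} =
        Nat.card {A : Finset (List Bool) // IsConfig (LTree.node Gl Gr) A} ↔
      ((labels Gl = labels Sl ∧ labels Gr = labels Sr) ∨
       (labels Gl = labels Sr ∧ labels Gr = labels Sl)) := by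
  have hu : labels Gl ∪ labels Gr = labels Sl ∪ labels Sr := by
    rw [← labels_node, ← labels_node]; exact hlab
  have hdS : Disjoint (labels Sl) (labels Sr) := by
    have hS' : (labelList Sl ++ labelList Sr).Nodup := hS
    rw [List.nodup_append] at hS'
    rename' hS' => hS
    exact List.disjoint_toFinset_iff_disjoint.2 (by intro a ha hb; exact hS.2.2 a ha a hb rfl)
  constructor
  · intro h
    -- convert cardinalities to ncard of sets
    have hc1 : Nat.card {A : Finset (List Bool) // IsConfigOn (LTree.node Gl Gr) Sl Sr A}
        = {A : Finset (List Bool) | IsConfigOn (LTree.node Gl Gr) Sl Sr A}.ncard :=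
      Nat.card_coe_set_eq _
    have hc2 : Nat.card {A : Finset (List Bool) // IsConfig (LTree.node Gl Gr) A}
        = {A : Finset (List Bool) | IsConfig (LTree.node Gl Gr) A}.ncard :=
      Nat.card_coe_set_eq _
    have hsub : {A : Finset (List Bool) | IsConfigOn (LTree.node Gl Gr) Sl Sr A}
        ⊆ {A : Finset (List Bool) | IsConfig (LTree.node Gl Gr) A} := fun A hA => hA.1
    have hset := Set.eq_of_subset_of_ncard_le hsub
      (le_of_eq (by rw [← hc1, ← hc2, h])) (config_finite _)
    have htop : ({[false], [true]} : Finset (List Bool))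
        ∈ {A : Finset (List Bool) | IsConfigOn (LTree.node Gl Gr) Sl Sr A} := by
      rw [hset]; exact top_isConfig Gl Gr
    have h1 := htop.2 [false] (by simp)
    have h2 := htop.2 [true] (by simp)
    have e1 : labelsAt (LTree.node Gl Gr) [false] = labels Gl := by simp [labelsAt, subtreeAt]
    have e2 : labelsAt (LTree.node Gl Gr) [true] = labels Gr := by simp [labelsAt, subtreeAt]
    rw [e1] at h1
    rw [e2] at h2
    exact bipart hu hdS (labels_nonempty Sl) (labels_nonempty Sr) h1 h2
  · intro h
    apply Nat.card_congr
    refine Equiv.subtypeEquivRight (fun A => ?_)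
    constructor
    · exact fun h' => h'.1
    · intro hA
      refine ⟨hA, fun p hp => ?_⟩
      obtain ⟨hv, hne⟩ := hA.1 p hp
      cases p with
      | nil => exact absurd rfl hne
      | cons b p =>
          cases b
          · have hsub : labelsAt (LTree.node Gl Gr) (false :: p) ⊆ labels Gl :=
              labels_subtreeAt Gl p
            rcases h with ⟨hl, _⟩ | ⟨hl, _⟩
            · exact Or.inl (by rw [← hl]; exact hsub)
            · exact Or.inr (by rw [← hl]; exact hsub)
          · have hsub : labelsAt (LTree.node Gl Gr) (true :: p) ⊆ labels Gr :=
              labels_subtreeAt Gr p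
            rcases h with ⟨_, hr⟩ | ⟨_, hr⟩
            · exact Or.inr (by rw [← hr]; exact hsub)
            · exact Or.inl (by rw [← hr]; exact hsub)
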